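/- Let T > 0 and a, G ≥ 0, and let e, φ₀, φ₁, ψ₀, ψ₁ : [0,T] × ℝ → ℝ be continuous and 1-periodic in the second variable, with e continuously differentiable, |φ₀(t,x)| ≤ a and |φ₁(t,x)| ≤ a for all (t,x), ∫₀¹ |ψ₀(t,x)| dx ≤ G and ∫₀¹ |ψ₁(t,x)| dx ≤ G for all t ∈ [0,T], and suppose ∂ₜe = φ₀·e + ψ₀ and ∂ₓe = φ₁·e + ψ₁ on [0,T] × ℝ. Then |e(t,x)| ≤ (1 + a)·(∫₀¹ |e(0,y)| dy + G·t)·e^{a·t} + G for all (t,x) ∈ [0,T] × ℝ. -/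

import Mathlib

open Real MeasureTheory intervalIntegral Set Function

lemma my_swap {f : ℝ → ℝ → ℝ} (hf : Continuous (Function.uncurry f)) {s : ℝ} (hs : 0 ≤ s) :
    (∫ x in (0:ℝ)..1, ∫ r in (0:ℝ)..s, f x r) = ∫ r in (0:ℝ)..s, ∫ x in (0:ℝ)..1, f x r := by
  rw [intervalIntegral.integral_of_le hs, intervalIntegral.integral_of_le (by norm_num : (0:ℝ) ≤ 1)]
  simp_rw [intervalIntegral.integral_of_le hs, intervalIntegral.integral_of_le (by norm_num : (0:ℝ) ≤ 1)]
  rw [MeasureTheory.integral_integral_swap]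
  rw [Measure.prod_restrict]
  exact (hf.continuousOn.integrableOn_compact (isCompact_Icc.prod isCompact_Icc)).mono_set
    (Set.prod_mono Set.Ioc_subset_Icc_self Set.Ioc_subset_Icc_self)

lemma my_gronwall {u : ℝ → ℝ} {a C t : ℝ} (ha : 0 ≤ a) (ht : 0 ≤ t)
    (hu : Continuous u) (hu0 : ∀ s, 0 ≤ u s)
    (h : ∀ s ∈ Set.Icc (0:ℝ) t, u s ≤ C + a * ∫ r in (0:ℝ)..s, u r) :
    u t ≤ C * Real.exp (a * t) := by
  set f : ℝ → ℝ := fun s => ∫ r in (0:ℝ)..s, u r with hfdef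
  have hf' : ∀ s : ℝ, HasDerivAt f (u s) s := fun s =>
    intervalIntegral.integral_hasDerivAt_right (hu.intervalIntegrable _ _)
      (hu.stronglyMeasurableAtFilter _ _) hu.continuousAt
  have hfs : ∀ s ∈ Set.Icc (0:ℝ) t, 0 ≤ f s := fun s hs =>
    intervalIntegral.integral_nonneg hs.1 (fun r _ => hu0 r)
  have key := norm_le_gronwallBound_of_norm_deriv_right_le (f := f) (f' := u)
    (δ := 0) (K := a) (ε := C) (a := 0) (b := t)
    ((fun s _ => (hf' s).continuousAt.continuousWithinAt))
    (fun s _ => (hf' s).hasDerivWithinAt)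
    (by simp [hfdef])
    (fun s hs => by
      rw [Real.norm_eq_abs, Real.norm_eq_abs, abs_of_nonneg (hu0 s),
        abs_of_nonneg (hfs s ⟨hs.1, hs.2.le⟩)]
      linarith [h s ⟨hs.1, hs.2.le⟩])
  have hft := key t ⟨ht, le_rfl⟩
  rw [Real.norm_eq_abs, abs_of_nonneg (hfs t ⟨ht, le_rfl⟩), sub_zero] at hft
  have hut : u t ≤ C + a * f t := h t ⟨ht, le_rfl⟩
  rcases eq_or_ne a 0 with h0 | h0
  · simp only [h0, zero_mul, add_zero, Real.exp_zero, mul_one] at hut ⊢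
    linarith
  · rw [gronwallBound_of_K_ne_0 h0] at hft
    have : a * f t ≤ a * (0 * Real.exp (a * t) + C / a * (Real.exp (a * t) - 1)) :=
      mul_le_mul_of_nonneg_left hft ha
    have heq : C + a * (0 * Real.exp (a * t) + C / a * (Real.exp (a * t) - 1))
        = C * Real.exp (a * t) := by field_simp; ring
    linarith

/-- A priori bound on the rescaled electric field of the surface-symmetric
Einstein–Vlasov–Maxwell system: if `∂ₜe = φ₀ e + ψ₀` and `∂ₓe = φ₁ e + ψ₁` on
`[0,T] × S¹` with `|φᵢ| ≤ a` and `∫₀¹|ψᵢ| dx ≤ G`, then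
`|e(t,x)| ≤ (1+a)(∫₀¹|e(0,·)| + G t) e^{a t} + G`. -/
theorem electric_field_bound
    (T a G : ℝ) (hT : 0 < T) (ha : 0 ≤ a) (hG : 0 ≤ G)
    (e φ₀ φ₁ ψ₀ ψ₁ : ℝ → ℝ → ℝ)
    (he : ContDiff ℝ 1 (Function.uncurry e))
    (hφ₀ : Continuous (Function.uncurry φ₀)) (hφ₁ : Continuous (Function.uncurry φ₁))
    (hψ₀ : Continuous (Function.uncurry ψ₀)) (hψ₁ : Continuous (Function.uncurry ψ₁))
    (heper : ∀ t, Function.Periodic (e t) 1)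
    (hφ₀per : ∀ t, Function.Periodic (φ₀ t) 1)
    (hφ₁per : ∀ t, Function.Periodic (φ₁ t) 1)
    (hψ₀per : ∀ t, Function.Periodic (ψ₀ t) 1)
    (hψ₁per : ∀ t, Function.Periodic (ψ₁ t) 1)
    (hφ₀a : ∀ t ∈ Set.Icc (0:ℝ) T, ∀ x : ℝ, |φ₀ t x| ≤ a)
    (hφ₁a : ∀ t ∈ Set.Icc (0:ℝ) T, ∀ x : ℝ, |φ₁ t x| ≤ a)
    (hψ₀G : ∀ t ∈ Set.Icc (0:ℝ) T, (∫ x in (0:ℝ)..1, |ψ₀ t x|) ≤ G)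
    (hψ₁G : ∀ t ∈ Set.Icc (0:ℝ) T, (∫ x in (0:ℝ)..1, |ψ₁ t x|) ≤ G)
    (heqt : ∀ t ∈ Set.Icc (0:ℝ) T, ∀ x : ℝ,
      deriv (fun s => e s x) t = φ₀ t x * e t x + ψ₀ t x)
    (heqx : ∀ t ∈ Set.Icc (0:ℝ) T, ∀ x : ℝ,
      deriv (e t) x = φ₁ t x * e t x + ψ₁ t x) :
    ∀ t ∈ Set.Icc (0:ℝ) T, ∀ x : ℝ,
      |e t x| ≤ (1 + a) * ((∫ y in (0:ℝ)..1, |e 0 y|) + G * t) * Real.exp (a * t) + G := by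
  have hec : Continuous (Function.uncurry e) := he.continuous
  -- section continuity
  have hsecx : ∀ x : ℝ, Continuous (fun s => e s x) := fun x =>
    hec.comp (continuous_id.prodMk continuous_const)
  have hsect : ∀ t : ℝ, Continuous (e t) := fun t =>
    hec.comp (continuous_const.prodMk continuous_id)
  set I : ℝ → ℝ := fun s => ∫ x in (0:ℝ)..1, |e s x| with hIdef
  have hIcont : Continuous I :=
    intervalIntegral.continuous_parametric_intervalIntegral_of_continuous'
      (f := fun t x => |e t x|) (μ := volume) hec.abs 0 1
  have hInn : ∀ s, 0 ≤ I s := fun s =>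
    intervalIntegral.integral_nonneg (by norm_num) (fun x _ => abs_nonneg _)
  -- the integrand for the time estimate
  set F : ℝ → ℝ → ℝ := fun x r => a * |e r x| + |ψ₀ r x| with hFdef
  have hFc : Continuous (Function.uncurry F) := by
    apply Continuous.add
    · exact continuous_const.mul ((hec.abs).comp continuous_swap)
    · exact (hψ₀.abs).comp continuous_swap
  -- pointwise-in-x time inequality
  have hkey : ∀ s ∈ Set.Icc (0:ℝ) T, ∀ x : ℝ,
      |e s x| ≤ |e 0 x| + ∫ r in (0:ℝ)..s, F x r := by
    intro s hs x
    have hdiff : Differentiable ℝ (fun r : ℝ => e r x) :=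
      (he.differentiable one_ne_zero).comp (differentiable_id.prodMk (differentiable_const x))
    set g' : ℝ → ℝ := fun r => φ₀ r x * e r x + ψ₀ r x with hg'def
    have hg'c : Continuous g' :=
      ((hφ₀.comp (continuous_id.prodMk continuous_const)).mul (hsecx x)).add
        (hψ₀.comp (continuous_id.prodMk continuous_const))
    have hderiv : ∀ r ∈ Set.uIcc (0:ℝ) s, HasDerivAt (fun r => e r x) (g' r) r := by
      intro r hr
      rw [Set.uIcc_of_le hs.1] at hr
      have h1 := (hdiff r).hasDerivAt
      rwa [heqt r ⟨hr.1, hr.2.trans hs.2⟩ x] at h1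
    have hftc : (∫ r in (0:ℝ)..s, g' r) = e s x - e 0 x :=
      intervalIntegral.integral_eq_sub_of_hasDerivAt hderiv (hg'c.intervalIntegrable _ _)
    have h1 : |e s x - e 0 x| ≤ ∫ r in (0:ℝ)..s, |g' r| := by
      rw [← hftc]
      exact intervalIntegral.abs_integral_le_integral_abs hs.1
    have h2 : (∫ r in (0:ℝ)..s, |g' r|) ≤ ∫ r in (0:ℝ)..s, F x r := by
      apply intervalIntegral.integral_mono_on hs.1 (hg'c.abs.intervalIntegrable _ _)
        (((continuous_const.mul (hsecx x).abs).add
          ((hψ₀.comp (continuous_id.prodMk continuous_const)).abs)).intervalIntegrable _ _)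
      intro r hr
      have hb : |g' r| ≤ |φ₀ r x| * |e r x| + |ψ₀ r x| := by
        calc |g' r| ≤ |φ₀ r x * e r x| + |ψ₀ r x| := abs_add_le _ _
          _ = |φ₀ r x| * |e r x| + |ψ₀ r x| := by rw [abs_mul]
      have hφ : |φ₀ r x| ≤ a := hφ₀a r ⟨hr.1, hr.2.trans hs.2⟩ x
      have := mul_le_mul_of_nonneg_right hφ (abs_nonneg (e r x))
      show |g' r| ≤ a * |e r x| + |ψ₀ r x|
      linarith
    have h3 := abs_sub_abs_le_abs_sub (e s x) (e 0 x)
    linarith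
  -- integral inequality for I
  have hIkey : ∀ s ∈ Set.Icc (0:ℝ) T, I s ≤ I 0 + G * s + a * ∫ r in (0:ℝ)..s, I r := by
    intro s hs
    have hinnerx : Continuous (fun x => ∫ r in (0:ℝ)..s, F x r) :=
      intervalIntegral.continuous_parametric_intervalIntegral_of_continuous'
        (μ := volume) hFc 0 s
    have hinnerr : Continuous (fun r => ∫ x in (0:ℝ)..1, F x r) :=
      intervalIntegral.continuous_parametric_intervalIntegral_of_continuous'
        (f := fun r x => F x r) (μ := volume) (hFc.comp continuous_swap) 0 1
    have step1 : I s ≤ ∫ x in (0:ℝ)..1, (|e 0 x| + ∫ r in (0:ℝ)..s, F x r) := by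
      apply intervalIntegral.integral_mono_on (by norm_num)
        ((hsect s).abs.intervalIntegrable _ _)
        (((hsect 0).abs.add hinnerx).intervalIntegrable _ _)
      exact fun x _ => hkey s hs x
    have step2 : (∫ x in (0:ℝ)..1, (|e 0 x| + ∫ r in (0:ℝ)..s, F x r))
        = I 0 + ∫ x in (0:ℝ)..1, ∫ r in (0:ℝ)..s, F x r :=
      intervalIntegral.integral_add ((hsect 0).abs.intervalIntegrable _ _)
        (hinnerx.intervalIntegrable _ _)
    have step3 : (∫ x in (0:ℝ)..1, ∫ r in (0:ℝ)..s, F x r)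
        = ∫ r in (0:ℝ)..s, ∫ x in (0:ℝ)..1, F x r := my_swap hFc hs.1
    have step4 : (∫ r in (0:ℝ)..s, ∫ x in (0:ℝ)..1, F x r)
        ≤ ∫ r in (0:ℝ)..s, (a * I r + G) := by
      apply intervalIntegral.integral_mono_on hs.1 (hinnerr.intervalIntegrable _ _)
        ((show Continuous fun r => a * I r + G from (continuous_const.mul hIcont).add continuous_const).intervalIntegrable _ _)
      intro r hr
      have hc1 : Continuous fun y : ℝ => a * |e r y| :=
        continuous_const.mul (hsect r).abs
      have hc2 : Continuous fun y : ℝ => |ψ₀ r y| :=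
        (hψ₀.comp (continuous_const.prodMk continuous_id)).abs
      have heq : (∫ x in (0:ℝ)..1, F x r) = a * I r + ∫ x in (0:ℝ)..1, |ψ₀ r x| := by
        show (∫ x in (0:ℝ)..1, (a * |e r x| + |ψ₀ r x|))
            = a * (∫ x in (0:ℝ)..1, |e r x|) + ∫ x in (0:ℝ)..1, |ψ₀ r x|
        rw [intervalIntegral.integral_add (hc1.intervalIntegrable _ _)
          (hc2.intervalIntegrable _ _), intervalIntegral.integral_const_mul]
      rw [heq]
      have := hψ₀G r ⟨hr.1, hr.2.trans hs.2⟩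
      linarith
    have step5 : (∫ r in (0:ℝ)..s, (a * I r + G)) = a * (∫ r in (0:ℝ)..s, I r) + G * s := by
      rw [intervalIntegral.integral_add ((show Continuous fun r => a * I r from continuous_const.mul hIcont).intervalIntegrable _ _)
        intervalIntegrable_const, intervalIntegral.integral_const_mul,
        intervalIntegral.integral_const]
      simp [mul_comm]
    calc I s ≤ ∫ x in (0:ℝ)..1, (|e 0 x| + ∫ r in (0:ℝ)..s, F x r) := step1
      _ = I 0 + ∫ x in (0:ℝ)..1, ∫ r in (0:ℝ)..s, F x r := step2
      _ = I 0 + ∫ r in (0:ℝ)..s, ∫ x in (0:ℝ)..1, F x r := by rw [step3]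
      _ ≤ I 0 + ∫ r in (0:ℝ)..s, (a * I r + G) := by linarith
      _ = I 0 + G * s + a * ∫ r in (0:ℝ)..s, I r := by rw [step5]; ring
  -- Gronwall
  have hI : ∀ t ∈ Set.Icc (0:ℝ) T, I t ≤ (I 0 + G * t) * Real.exp (a * t) := by
    intro t ht
    apply my_gronwall ha ht.1 hIcont hInn
    intro s hs
    have h1 := hIkey s ⟨hs.1, hs.2.trans ht.2⟩
    have h2 : G * s ≤ G * t := mul_le_mul_of_nonneg_left hs.2 hG
    linarith
  -- spatial estimate
  intro t ht x
  set D : ℝ → ℝ := fun y => φ₁ t y * e t y + ψ₁ t y with hDdef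
  have hDc : Continuous D :=
    ((hφ₁.comp (continuous_const.prodMk continuous_id)).mul (hsect t)).add
      (hψ₁.comp (continuous_const.prodMk continuous_id))
  have hDper : Function.Periodic (fun y => |D y|) 1 := by
    intro y
    simp only [hDdef]
    rw [hφ₁per t y, heper t y, hψ₁per t y]
  have hederiv : ∀ y : ℝ, HasDerivAt (e t) (D y) y := by
    intro y
    have hdiff : Differentiable ℝ (e t) :=
      (he.differentiable one_ne_zero).comp ((differentiable_const t).prodMk differentiable_id)
    have h1 := (hdiff y).hasDerivAt
    rwa [heqx t ht y] at h1
  -- minimum point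
  obtain ⟨y₀, hy₀mem, hy₀⟩ := isCompact_Icc.exists_isMinOn (Set.nonempty_Icc.2 zero_le_one)
    ((hsect t).abs.continuousOn : ContinuousOn (fun y => |e t y|) (Set.Icc 0 1))
  have hmin : |e t y₀| ≤ I t := by
    have h1 : (∫ _x in (0:ℝ)..1, |e t y₀|) ≤ I t := by
      apply intervalIntegral.integral_mono_on zero_le_one intervalIntegrable_const
        ((hsect t).abs.intervalIntegrable _ _)
      exact fun y hy => hy₀ hy
    simpa using h1
  -- shift x into [y₀, y₀+1]
  set n : ℤ := ⌊x - y₀⌋ with hndef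
  set x' : ℝ := x - n with hx'def
  have hfl := Int.floor_le (x - y₀)
  have hfl2 := Int.lt_floor_add_one (x - y₀)
  have hx'1 : y₀ ≤ x' := by
    simp only [hx'def, hndef]
    linarith
  have hx'2 : x' ≤ y₀ + 1 := by
    simp only [hx'def, hndef]
    linarith
  have hex' : e t x' = e t x := by
    have h1 := (heper t).sub_int_mul_eq (x := x) (n := n)
    simpa [hx'def] using h1
  have hftc : (∫ y in y₀..x', D y) = e t x' - e t y₀ :=
    intervalIntegral.integral_eq_sub_of_hasDerivAt (fun y _ => hederiv y)
      (hDc.intervalIntegrable _ _)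
  have h1 : |e t x' - e t y₀| ≤ ∫ y in y₀..x', |D y| := by
    rw [← hftc]
    exact intervalIntegral.abs_integral_le_integral_abs hx'1
  have h2 : (∫ y in y₀..x', |D y|) ≤ ∫ y in y₀..(y₀+1), |D y| :=
    intervalIntegral.integral_mono_interval le_rfl hx'1 hx'2
      (Filter.Eventually.of_forall fun y => abs_nonneg _) (hDc.abs.intervalIntegrable _ _)
  have h3 : (∫ y in y₀..(y₀+1), |D y|) = ∫ y in (0:ℝ)..1, |D y| := by
    have h4 := hDper.intervalIntegral_add_eq y₀ 0
    simpa using h4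
  have h4 : (∫ y in (0:ℝ)..1, |D y|) ≤ a * I t + G := by
    have hc2 : Continuous fun y : ℝ => |ψ₁ t y| :=
      (hψ₁.comp (continuous_const.prodMk continuous_id)).abs
    have hc1 : Continuous fun y : ℝ => a * |e t y| + |ψ₁ t y| :=
      (continuous_const.mul (hsect t).abs).add hc2
    have hle : (∫ y in (0:ℝ)..1, |D y|) ≤ ∫ y in (0:ℝ)..1, (a * |e t y| + |ψ₁ t y|) := by
      apply intervalIntegral.integral_mono_on zero_le_one (hDc.abs.intervalIntegrable _ _)
        (hc1.intervalIntegrable _ _)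
      intro y _
      have hb : |D y| ≤ |φ₁ t y| * |e t y| + |ψ₁ t y| := by
        calc |D y| ≤ |φ₁ t y * e t y| + |ψ₁ t y| := abs_add_le _ _
          _ = |φ₁ t y| * |e t y| + |ψ₁ t y| := by rw [abs_mul]
      have hφ := mul_le_mul_of_nonneg_right (hφ₁a t ht y) (abs_nonneg (e t y))
      linarith
    have heq : (∫ y in (0:ℝ)..1, (a * |e t y| + |ψ₁ t y|))
        = a * I t + ∫ y in (0:ℝ)..1, |ψ₁ t y| := by
      show (∫ y in (0:ℝ)..1, (a * |e t y| + |ψ₁ t y|))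
          = a * (∫ y in (0:ℝ)..1, |e t y|) + ∫ y in (0:ℝ)..1, |ψ₁ t y|
      rw [intervalIntegral.integral_add ((show Continuous fun y => a * |e t y| from continuous_const.mul (hsect t).abs).intervalIntegrable _ _)
        (hc2.intervalIntegrable _ _), intervalIntegral.integral_const_mul]
    have := hψ₁G t ht
    rw [heq] at hle
    linarith
  have habs : |e t x'| ≤ |e t y₀| + |e t x' - e t y₀| := by
    have := abs_sub_abs_le_abs_sub (e t x') (e t y₀)
    linarith
  have hfin : |e t x| ≤ (1 + a) * I t + G := by
    rw [← hex']
    linarith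
  have hIt := hI t ht
  have hmul : (1 + a) * I t ≤ (1 + a) * ((I 0 + G * t) * Real.exp (a * t)) :=
    mul_le_mul_of_nonneg_left hIt (by linarith)
  calc |e t x| ≤ (1 + a) * I t + G := hfin
    _ ≤ (1 + a) * ((I 0 + G * t) * Real.exp (a * t)) + G := by linarith
    _ = (1 + a) * ((∫ y in (0:ℝ)..1, |e 0 y|) + G * t) * Real.exp (a * t) + G := by
        rw [hIdef]; ring
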